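/- Let 1 ≤ k ≤ n and ℓ ≥ 1, and let C be an (n,k)-code over a field F which is GZP(ℓ), with generator matrix G. Then for all subsets A_1, …, A_ℓ ⊆ [n], each of size at most k, dim(G_{A_1} ∩ ⋯ ∩ G_{A_ℓ}) = max over all partitions P_1 ⊔ ⋯ ⊔ P_s = [ℓ] into nonempty parts of (Σ_{i=1}^s |A_{P_i}| − (s−1)·k). In particular, every GZP(ℓ) code is MDS(ℓ). -/

import Mathlib

/-!
STATEMENT 8: Lemma 3.1 (lem:gzp-dim). If C is a GZP(ℓ) code with generator matrix G,
then for all subsets A_1, …, A_ℓ ⊆ [n] of size at most k,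
dim(G_{A_1} ∩ ⋯ ∩ G_{A_ℓ}) = max over partitions of [ℓ] of (Σ_i |A_{P_i}| − (s−1)k).
In particular, every GZP(ℓ) code is MDS(ℓ).
-/

open Finset

noncomputable section

/-- `G_A`: the span of the columns of `G` indexed by `A`. -/
def colSpan {K : Type*} [Field K] {k n : ℕ} (G : Matrix (Fin k) (Fin n) K)
    (A : Finset (Fin n)) : Submodule K (Fin k → K) :=
  Submodule.span K ((fun j i => G i j) '' (A : Set (Fin n)))

/-- The value `Σ_{p ∈ P} |∩_{j ∈ p} A_j| − (s − 1)·k` associated to a partition `P`. -/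
def partVal {ℓ n : ℕ} (k : ℕ) (A : Fin ℓ → Finset (Fin n))
    (P : Finpartition (Finset.univ : Finset (Fin ℓ))) : ℤ :=
  (∑ p ∈ P.parts, ((p.inf A).card : ℤ)) - ((P.parts.card : ℤ) - 1) * k

/-- `G` is a generator matrix of the code `C`: its rows form a basis of `C`. -/
def IsGenMatrix {F : Type*} [Field F] {k n : ℕ} (C : Submodule F (Fin n → F))
    (G : Matrix (Fin k) (Fin n) F) : Prop :=
  LinearIndependent F (fun i => G i) ∧ Submodule.span F (Set.range fun i => G i) = C

/-- `S = (S_1, …, S_k)` is a generic zero pattern. -/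
def IsGenericZP {k n : ℕ} (S : Fin k → Finset (Fin n)) : Prop :=
  ∀ I : Finset (Fin k), I.Nonempty → (I.inf S).card ≤ k - I.card

/-- The order of a zero pattern: the number of distinct nonempty sets among the `S_i`. -/
def patternOrder {k n : ℕ} (S : Fin k → Finset (Fin n)) : ℕ :=
  ((Finset.univ.image S).erase ∅).card

/-- `G` attains the zero pattern `S`. -/
def Attains {F : Type*} [Field F] {k n : ℕ} (G : Matrix (Fin k) (Fin n) F)
    (S : Fin k → Finset (Fin n)) : Prop :=
  ∃ M : Matrix (Fin k) (Fin k) F, IsUnit M.det ∧ ∀ i j, j ∈ S i → (M * G) i j = 0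

/-- `C` is `GZP(ℓ)`. -/
def IsGZP {F : Type*} [Field F] (n k ℓ : ℕ) (C : Submodule F (Fin n → F)) : Prop :=
  ∀ G : Matrix (Fin k) (Fin n) F, IsGenMatrix C G →
    (∀ A : Finset (Fin n), A.card = k → colSpan G A = ⊤) ∧
    (∀ S : Fin k → Finset (Fin n), IsGenericZP S → patternOrder S ≤ ℓ → Attains G S)

section GZPAux

variable {ℓ : ℕ}


/-- greedy value at coordinate `i` given current values `f`. -/
def gzpNewval (h : Finset (Fin ℓ) → ℕ) (f : Fin ℓ → ℕ) (i : Fin ℓ) : ℕ :=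
  (((Finset.Iic i).powerset.filter (fun T => i ∈ T)).image
    (fun T => h T - ∑ j ∈ T.erase i, f j)).min' (by
      refine Finset.Nonempty.image ⟨{i}, ?_⟩ _
      simp)

/-- iterated greedy -/
def gzpIter (h : Finset (Fin ℓ) → ℕ) : ℕ → (Fin ℓ → ℕ)
  | 0 => fun _ => 0
  | (t+1) =>
    if ht : t < ℓ then
      Function.update (gzpIter h t) ⟨t, ht⟩ (gzpNewval h (gzpIter h t) ⟨t, ht⟩)
    else gzpIter h t

lemma gzpIter_stable (h : Finset (Fin ℓ) → ℕ) {t t' : ℕ} (htt : t ≤ t') (j : Fin ℓ)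
    (hj : (j : ℕ) < t) : gzpIter h t' j = gzpIter h t j := by
  induction t' with
  | zero => omega
  | succ t' ih =>
    rcases Nat.lt_or_ge t (t' + 1) with hlt | hge
    · have h1 : t ≤ t' := by omega
      show gzpIter h (t' + 1) j = _
      rw [gzpIter]
      split
      · rename_i ht'
        rw [Function.update_of_ne, ih h1]
        intro hEq
        apply absurd (congrArg Fin.val hEq)
        simp only [Fin.val]
        omega
      · exact ih h1
    · have : t = t' + 1 := by omega
      subst this
      rfl

lemma gzpIter_feas (h : Finset (Fin ℓ) → ℕ)
    (hmono : ∀ ⦃T T' : Finset (Fin ℓ)⦄, T ⊆ T' → h T ≤ h T') (t : ℕ) :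
    ∀ T : Finset (Fin ℓ), (∀ j ∈ T, (j : ℕ) < t) → ∑ j ∈ T, gzpIter h t j ≤ h T := by
  induction t with
  | zero =>
    intro T hT
    have : T = ∅ := by
      apply Finset.eq_empty_of_forall_notMem
      intro j hj; exact absurd (hT j hj) (by omega)
    simp [this, gzpIter]
  | succ t ih =>
    intro T hT
    rw [gzpIter]
    split
    case isFalse ht =>
      apply ih
      intro j hj
      exact lt_of_lt_of_le j.2 (le_of_not_gt ht)
    case isTrue ht =>
      set i : Fin ℓ := ⟨t, ht⟩ with hi
      have hit : (i : ℕ) = t := rfl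
      by_cases hiT : i ∈ T
      · rw [← Finset.add_sum_erase _ _ hiT]
        have herase_lt : ∀ j ∈ T.erase i, (j : ℕ) < t := by
          intro j hj
          have h1 := hT j (Finset.mem_of_mem_erase hj)
          have h2 := Finset.ne_of_mem_erase hj
          have : (j : ℕ) ≠ t := fun hc => h2 (Fin.ext hc)
          omega
        have hsum_eq : ∑ j ∈ T.erase i, Function.update (gzpIter h t) i
            (gzpNewval h (gzpIter h t) i) j = ∑ j ∈ T.erase i, gzpIter h t j := by
          refine Finset.sum_congr rfl fun j hj => ?_
          exact Function.update_of_ne (Finset.ne_of_mem_erase hj) _ _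
        have he : ∑ j ∈ T.erase i, gzpIter h t j ≤ h (T.erase i) := ih _ herase_lt
        have hTsub : T ⊆ Finset.Iic i := by
          intro j hj
          simp only [Finset.mem_Iic]
          exact Fin.le_def.2 (by have := hT j hj; rw [hit]; omega)
        have hval : gzpNewval h (gzpIter h t) i ≤ h T - ∑ j ∈ T.erase i, gzpIter h t j := by
          apply Finset.min'_le
          exact Finset.mem_image.2 ⟨T, Finset.mem_filter.2
            ⟨Finset.mem_powerset.2 hTsub, hiT⟩, rfl⟩
        have hmono' : h (T.erase i) ≤ h T := hmono (Finset.erase_subset _ _)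
        rw [Function.update_self, hsum_eq]
        omega
      · have hall : ∀ j ∈ T, (j : ℕ) < t := by
          intro j hj
          have h1 := hT j hj
          have : (j : ℕ) ≠ t := by
            intro hc; exact hiT (by rwa [show j = i from Fin.ext hc] at hj)
          omega
        have : ∑ j ∈ T, Function.update (gzpIter h t) i
            (gzpNewval h (gzpIter h t) i) j = ∑ j ∈ T, gzpIter h t j := by
          refine Finset.sum_congr rfl fun j hj => ?_
          refine Function.update_of_ne (fun hc => ?_) _ _
          exact absurd (hall j hj) (by rw [hc]; simp [hi])
        rw [this]
        exact ih _ hall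

lemma gzp_tight (h : Finset (Fin ℓ) → ℕ)
    (hmono : ∀ ⦃T T' : Finset (Fin ℓ)⦄, T ⊆ T' → h T ≤ h T') (i : Fin ℓ) :
    ∃ T : Finset (Fin ℓ), T ⊆ Finset.Iic i ∧ i ∈ T ∧
      ∑ j ∈ T, gzpIter h ℓ j = h T := by
  set t : ℕ := (i : ℕ) with htdef
  have ht : t < ℓ := i.2
  have hieq : (⟨t, ht⟩ : Fin ℓ) = i := rfl
  -- the min is attained
  have hmem := Finset.min'_mem
    ((((Finset.Iic i).powerset.filter (fun T => i ∈ T)).image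
      (fun T => h T - ∑ j ∈ T.erase i, gzpIter h t j)))
    (by refine Finset.Nonempty.image ⟨{i}, ?_⟩ _; simp)
  rw [Finset.mem_image] at hmem
  obtain ⟨T₀, hT₀mem, hT₀eq⟩ := hmem
  rw [Finset.mem_filter, Finset.mem_powerset] at hT₀mem
  obtain ⟨hT₀sub, hiT₀⟩ := hT₀mem
  refine ⟨T₀, hT₀sub, hiT₀, ?_⟩
  have herase_lt : ∀ j ∈ T₀.erase i, (j : ℕ) < t := by
    intro j hj
    have h1 : j ≤ i := Finset.mem_Iic.1 (hT₀sub (Finset.mem_of_mem_erase hj))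
    have h2 := Finset.ne_of_mem_erase hj
    have : (j : ℕ) ≠ t := fun hc => h2 (Fin.ext hc)
    have := Fin.le_def.1 h1
    omega
  have he : ∑ j ∈ T₀.erase i, gzpIter h t j ≤ h (T₀.erase i) :=
    gzpIter_feas h hmono t _ herase_lt
  have hmono' : h (T₀.erase i) ≤ h T₀ := hmono (Finset.erase_subset _ _)
  -- value of gzpIter at t+1
  have hstep : gzpIter h (t+1) = Function.update (gzpIter h t) i
      (gzpNewval h (gzpIter h t) i) := by
    rw [gzpIter, dif_pos ht]
  have hsum1 : ∑ j ∈ T₀, gzpIter h (t+1) j = h T₀ := by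
    rw [← Finset.add_sum_erase _ _ hiT₀, hstep, Function.update_self]
    have hrest : ∑ j ∈ T₀.erase i, Function.update (gzpIter h t) i
        (gzpNewval h (gzpIter h t) i) j = ∑ j ∈ T₀.erase i, gzpIter h t j := by
      refine Finset.sum_congr rfl fun j hj => ?_
      exact Function.update_of_ne (Finset.ne_of_mem_erase hj) _ _
    rw [hrest]
    have hval : gzpNewval h (gzpIter h t) i = h T₀ - ∑ j ∈ T₀.erase i, gzpIter h t j := by
      rw [gzpNewval, ← hT₀eq]
    omega
  rw [← hsum1]
  refine Finset.sum_congr rfl fun j hj => ?_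
  have hji : j ≤ i := Finset.mem_Iic.1 (hT₀sub hj)
  exact gzpIter_stable h (Nat.succ_le_of_lt ht) j (by have := Fin.le_def.1 hji; omega)

/-- The main combinatorial lemma (Dilworth-truncation greedy). -/
lemma gzp_comb (h : Finset (Fin ℓ) → ℕ)
    (hmono : ∀ ⦃T T' : Finset (Fin ℓ)⦄, T ⊆ T' → h T ≤ h T')
    (hsub : ∀ T T' : Finset (Fin ℓ), (T ∩ T').Nonempty →
      h (T ∪ T') + h (T ∩ T') ≤ h T + h T') :
    ∃ (m : Fin ℓ → ℕ) (P : Finpartition (Finset.univ : Finset (Fin ℓ))),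
      (∀ T : Finset (Fin ℓ), ∑ j ∈ T, m j ≤ h T) ∧
      (∑ j, m j = ∑ p ∈ P.parts, h p) := by
  classical
  set m : Fin ℓ → ℕ := gzpIter h ℓ with hm
  have hfeas : ∀ T : Finset (Fin ℓ), ∑ j ∈ T, m j ≤ h T := fun T =>
    gzpIter_feas h hmono ℓ T (fun j _ => j.2)
  -- tight sets are closed under unions of intersecting pairs
  have hunion : ∀ T T' : Finset (Fin ℓ), (T ∩ T').Nonempty →
      ∑ j ∈ T, m j = h T → ∑ j ∈ T', m j = h T' →
      ∑ j ∈ T ∪ T', m j = h (T ∪ T') := by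
    intro T T' hTT' hT hT'
    have h1 : ∑ j ∈ T ∪ T', m j + ∑ j ∈ T ∩ T', m j = ∑ j ∈ T, m j + ∑ j ∈ T', m j :=
      Finset.sum_union_inter
    have h2 := hfeas (T ∪ T')
    have h3 := hfeas (T ∩ T')
    have h4 := hsub T T' hTT'
    omega
  -- D i : the union of all tight sets containing i
  set D : Fin ℓ → Finset (Fin ℓ) := fun i =>
    ((Finset.univ : Finset (Fin ℓ)).powerset.filter
      (fun T => i ∈ T ∧ ∑ j ∈ T, m j = h T)).sup id with hD
  have hsup_tight : ∀ (i : Fin ℓ) (s : Finset (Finset (Fin ℓ))), s.Nonempty →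
      (∀ T ∈ s, i ∈ T ∧ ∑ j ∈ T, m j = h T) →
      i ∈ s.sup id ∧ ∑ j ∈ s.sup id, m j = h (s.sup id) := by
    intro i s hs hall
    induction hs using Finset.Nonempty.cons_induction with
    | singleton a =>
      simp only [Finset.sup_singleton, id]
      exact hall a (Finset.mem_singleton_self a)
    | cons a s ha hs ih =>
      have hind := ih (fun T hT => hall T (Finset.mem_cons_of_mem hT))
      have haT := hall a (Finset.mem_cons_self a s)
      rw [Finset.sup_cons]
      simp only [id_eq]
      have hsup_eq : (a ⊔ s.sup id : Finset (Fin ℓ)) = a ∪ s.sup id := rfl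
      rw [hsup_eq]
      constructor
      · exact Finset.mem_union_left _ haT.1
      · refine hunion a (s.sup id) ⟨i, ?_⟩ haT.2 hind.2
        exact Finset.mem_inter.2 ⟨haT.1, hind.1⟩
  have hDspec : ∀ i : Fin ℓ, i ∈ D i ∧ ∑ j ∈ D i, m j = h (D i) := by
    intro i
    obtain ⟨T₀, _, hiT₀, hT₀tight⟩ := gzp_tight h hmono i
    refine hsup_tight i _ ⟨T₀, ?_⟩ ?_
    · exact Finset.mem_filter.2 ⟨Finset.mem_powerset.2 (Finset.subset_univ _), hiT₀, hT₀tight⟩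
    · intro T hT
      have := Finset.mem_filter.1 hT
      exact this.2
  have hDeq : ∀ i j : Fin ℓ, j ∈ D i → D j = D i := by
    intro i j hj
    apply Finset.Subset.antisymm
    · -- D j ⊆ D i : the union D i ∪ D j is tight and contains i, so ⊆ D i
      have h1 : (D i ∩ D j).Nonempty := ⟨j, Finset.mem_inter.2 ⟨hj, (hDspec j).1⟩⟩
      have h2 : ∑ x ∈ D i ∪ D j, m x = h (D i ∪ D j) :=
        hunion _ _ h1 (hDspec i).2 (hDspec j).2
      have h3 : D i ∪ D j ⊆ D i := by
        have := Finset.le_sup (f := id) (s := ((Finset.univ : Finset (Fin ℓ)).powerset.filter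
          (fun T => i ∈ T ∧ ∑ j ∈ T, m j = h T))) (b := D i ∪ D j) ?_
        · exact this
        refine Finset.mem_filter.2 ⟨Finset.mem_powerset.2 (Finset.subset_univ _), ?_, h2⟩
        exact Finset.mem_union_left _ (hDspec i).1
      exact fun x hx => h3 (Finset.mem_union_right _ hx)
    · -- D i ⊆ D j since D i is a tight set containing j
      have := Finset.le_sup (f := id) (s := ((Finset.univ : Finset (Fin ℓ)).powerset.filter
        (fun T => j ∈ T ∧ ∑ x ∈ T, m x = h T))) (b := D i) ?_
      · exact this
      exact Finset.mem_filter.2 ⟨Finset.mem_powerset.2 (Finset.subset_univ _), hj, (hDspec i).2⟩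
  -- the partition
  have hdisj : ∀ p ∈ Finset.univ.image D, ∀ q ∈ Finset.univ.image D, p ≠ q → Disjoint p q := by
    intro p hp q hq hpq
    obtain ⟨i, _, hi⟩ := Finset.mem_image.1 hp
    obtain ⟨j, _, hjq⟩ := Finset.mem_image.1 hq
    rw [Finset.disjoint_left]
    intro x hxp hxq
    apply hpq
    rw [← hi, ← hjq] at *
    rw [← hDeq i x hxp, hDeq j x hxq]
  set P : Finpartition (Finset.univ : Finset (Fin ℓ)) :=
    { parts := Finset.univ.image D
      supIndep := Finset.supIndep_iff_pairwiseDisjoint.2 (fun p hp q hq hpq =>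
        hdisj p hp q hq hpq)
      sup_parts := by
        apply Finset.Subset.antisymm
        · intro x _; exact Finset.mem_univ x
        · intro x _
          rw [Finset.sup_eq_biUnion, Finset.mem_biUnion]
          exact ⟨D x, Finset.mem_image_of_mem D (Finset.mem_univ x), (hDspec x).1⟩
      bot_notMem := by
        intro hbot
        obtain ⟨i, _, hi⟩ := Finset.mem_image.1 hbot
        have := (hDspec i).1
        rw [hi] at this
        exact absurd this (Finset.notMem_empty i) } with hP
  refine ⟨m, P, hfeas, ?_⟩
  have hcover : (Finset.univ : Finset (Fin ℓ)) = (Finset.univ.image D).biUnion id := by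
    rw [← Finset.sup_eq_biUnion]
    exact P.sup_parts.symm
  have hdisj' : ((Finset.univ.image D : Finset (Finset (Fin ℓ))) : Set (Finset (Fin ℓ))).PairwiseDisjoint id :=
    fun p hp q hq hpq => hdisj p (Finset.mem_coe.1 hp) q (Finset.mem_coe.1 hq) hpq
  have h5 : ∑ j, m j = ∑ p ∈ Finset.univ.image D, ∑ j ∈ p, m j := by
    rw [Finset.sum_congr hcover (fun _ _ => rfl), Finset.sum_biUnion hdisj']
    rfl
  rw [h5]
  refine Finset.sum_congr rfl fun p hp => ?_
  obtain ⟨i, _, hi⟩ := Finset.mem_image.1 hp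
  rw [← hi]
  exact (hDspec i).2


lemma colSpan_mono {K : Type*} [Field K] {k n : ℕ} (G : Matrix (Fin k) (Fin n) K)
    {A B : Finset (Fin n)} (hAB : A ⊆ B) : colSpan G A ≤ colSpan G B :=
  Submodule.span_mono (Set.image_mono hAB)

lemma colSpan_eq_span_range {K : Type*} [Field K] {k n : ℕ} (G : Matrix (Fin k) (Fin n) K)
    (A : Finset (Fin n)) :
    colSpan G A = Submodule.span K (Set.range (fun j : A => (fun i => G i j.1))) := by
  unfold colSpan
  congr 1
  ext x
  simp

lemma finrank_colSpan_eq {F : Type*} [Field F] {k n : ℕ} (G : Matrix (Fin k) (Fin n) F)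
    (htop : ∀ A : Finset (Fin n), A.card = k → colSpan G A = ⊤) (hkn : k ≤ n)
    {B : Finset (Fin n)} (hB : B.card ≤ k) :
    Module.finrank F (colSpan G B) = B.card := by
  obtain ⟨B', hBB', hB'⟩ := Finset.exists_superset_card_eq hB (by simpa using hkn)
  have hli' : LinearIndependent F (fun j : B' => (fun i => G i j.1)) := by
    apply linearIndependent_of_top_le_span_of_card_eq_finrank
    · rw [← colSpan_eq_span_range, htop B' hB']
    · rw [Fintype.card_coe, hB', Module.finrank_pi, Fintype.card_fin]
  have hli : LinearIndependent F (fun j : B => (fun i => G i j.1)) := by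
    have := hli'.comp (fun j : B => (⟨j.1, hBB' j.2⟩ : B'))
      (fun a b hab => Subtype.ext (by simpa using congrArg Subtype.val hab))
    exact this
  rw [colSpan_eq_span_range, finrank_span_eq_card hli, Fintype.card_coe]

lemma finrank_inf_ge {F : Type*} [Field F] {k : ℕ} {ι : Type*} [DecidableEq ι]
    {s : Finset ι} (hs : s.Nonempty) (f : ι → Submodule F (Fin k → F)) :
    (∑ p ∈ s, (Module.finrank F (f p) : ℤ)) - ((s.card : ℤ) - 1) * k ≤
      (Module.finrank F ↥(s.inf f) : ℤ) := by
  induction hs using Finset.Nonempty.cons_induction with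
  | singleton a => rw [Finset.inf_singleton]; simp
  | cons a s ha hs ih =>
    rw [Finset.inf_cons, Finset.sum_cons, Finset.card_cons]
    have h1 : Module.finrank F ↥(f a ⊔ s.inf f) + Module.finrank F ↥(f a ⊓ s.inf f) =
        Module.finrank F ↥(f a) + Module.finrank F ↥(s.inf f) :=
      Submodule.finrank_sup_add_finrank_inf_eq _ _
    have h2 : Module.finrank F ↥(f a ⊔ s.inf f) ≤ k := by
      have := Submodule.finrank_le (f a ⊔ s.inf f)
      rwa [Module.finrank_pi, Fintype.card_fin] at this
    push_cast
    push_cast at ih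
    linarith


end GZPAux

theorem gzp_implies_mds {F : Type*} [Field F] (n k ℓ : ℕ)
    (hk : 1 ≤ k) (hkn : k ≤ n) (hℓ : 1 ≤ ℓ)
    (C : Submodule F (Fin n → F)) (hC : Module.finrank F C = k)
    (G : Matrix (Fin k) (Fin n) F) (hG : IsGenMatrix C G)
    (hgzp : IsGZP n k ℓ C)
    (A : Fin ℓ → Finset (Fin n)) (hA : ∀ i, (A i).card ≤ k) :
    IsGreatest {v : ℤ | ∃ P : Finpartition (Finset.univ : Finset (Fin ℓ)), v = partVal k A P}
      ((Module.finrank F ↥(⨅ i, colSpan G (A i))) : ℤ) := by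
  classical
  have : Nonempty (Fin ℓ) := ⟨⟨0, hℓ⟩⟩
  obtain ⟨htop, hatt⟩ := hgzp G hG
  set W : Submodule F (Fin k → F) := ⨅ i, colSpan G (A i) with hW
  -- ### Lower bound: every partition value is at most the dimension.
  have hlow : ∀ P : Finpartition (Finset.univ : Finset (Fin ℓ)),
      partVal k A P ≤ (Module.finrank F ↥W : ℤ) := by
    intro P
    have hparts : P.parts.Nonempty := P.parts_nonempty (by
      simp only [bot_eq_empty, ← Finset.nonempty_iff_ne_empty]
      exact Finset.univ_nonempty)
    set f : Finset (Fin ℓ) → Submodule F (Fin k → F) := fun p => colSpan G (p.inf A) with hf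
    have hle : P.parts.inf f ≤ W := by
      refine le_iInf fun i => ?_
      obtain ⟨p, hp, hip⟩ : ∃ p ∈ P.parts, i ∈ p := by
        have h1 : i ∈ P.parts.sup id := by rw [P.sup_parts]; exact Finset.mem_univ i
        rw [Finset.sup_eq_biUnion] at h1
        simpa using Finset.mem_biUnion.1 h1
      exact le_trans (Finset.inf_le hp) (colSpan_mono G (Finset.inf_le hip))
    have h1 := finrank_inf_ge hparts f
    have h2 : ∀ p ∈ P.parts, (Module.finrank F ↥(f p) : ℤ) = ((p.inf A).card : ℤ) := by
      intro p hp
      obtain ⟨i, hi⟩ := P.nonempty_of_mem_parts hp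
      rw [hf]
      exact_mod_cast congrArg Nat.cast (finrank_colSpan_eq G htop hkn
        (le_trans (Finset.card_le_card (Finset.inf_le hi)) (hA i)))
    rw [Finset.sum_congr rfl h2] at h1
    have h3 : (Module.finrank F ↥(P.parts.inf f) : ℤ) ≤ (Module.finrank F ↥W : ℤ) :=
      Int.ofNat_le.2 (Submodule.finrank_mono hle)
    unfold partVal
    linarith
  -- ### The combinatorial data.
  set hfun : Finset (Fin ℓ) → ℕ := fun T => k - (T.inf A).card with hhfun
  have hcardinf : ∀ (i : Fin ℓ) (T : Finset (Fin ℓ)), i ∈ T → (T.inf A).card ≤ k :=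
    fun i T hi => le_trans (Finset.card_le_card (Finset.inf_le hi)) (hA i)
  have hmono : ∀ ⦃T T' : Finset (Fin ℓ)⦄, T ⊆ T' → hfun T ≤ hfun T' := fun T T' hTT' =>
    Nat.sub_le_sub_left (Finset.card_le_card (Finset.inf_mono hTT')) k
  have hsubadd : ∀ T T' : Finset (Fin ℓ), (T ∩ T').Nonempty →
      hfun (T ∪ T') + hfun (T ∩ T') ≤ hfun T + hfun T' := by
    rintro T T' ⟨i, hi⟩
    rw [Finset.mem_inter] at hi
    have e1 : ((T ∪ T').inf A).card = (T.inf A ∩ T'.inf A).card := by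
      rw [Finset.inf_union]; rfl
    have e2 : T.inf A ∪ T'.inf A ⊆ (T ∩ T').inf A := by
      apply Finset.union_subset
      · have e2a : T.inf A ≤ (T ∩ T').inf A := Finset.inf_mono Finset.inter_subset_left
        exact e2a
      · have e2b : T'.inf A ≤ (T ∩ T').inf A := Finset.inf_mono Finset.inter_subset_right
        exact e2b
    have e3 := Finset.card_union_add_card_inter (T.inf A) (T'.inf A)
    have e5 := Finset.card_le_card e2
    have c1 := hcardinf i T hi.1
    have c2 := hcardinf i T' hi.2
    have c3 := hcardinf i (T ∪ T') (Finset.mem_union_left _ hi.1)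
    have c4 := hcardinf i (T ∩ T') (Finset.mem_inter.2 hi)
    simp only [hhfun]
    omega
  obtain ⟨m, P₀, hfeas, hsum⟩ := gzp_comb hfun hmono hsubadd
  -- ### Allocation of rows.
  set t : Fin ℓ → ℕ := fun i => ∑ j ∈ Finset.Iio i, m j with ht
  have hsumk : ∑ j, m j ≤ k := le_trans (hfeas Finset.univ) (Nat.sub_le _ _)
  have hIic : ∀ i : Fin ℓ, ∑ j ∈ Finset.Iic i, m j = m i + t i := by
    intro i
    have h0 : i ∉ Finset.Iio i := by simp
    have h1 : Finset.Iic i = insert i (Finset.Iio i) := (Finset.Iio_insert i).symm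
    rw [h1, Finset.sum_insert h0, ht]
  have hbound : ∀ i : Fin ℓ, t i + m i ≤ k := by
    intro i
    have h2 : ∑ j ∈ Finset.Iic i, m j ≤ ∑ j, m j :=
      Finset.sum_le_sum_of_subset (Finset.subset_univ _)
    have := hIic i
    omega
  set ρ : Fin ℓ → Finset (Fin k) := fun i =>
    (Finset.Ico (t i) (t i + m i)).attachFin (fun x hx => by
      have h1 := Finset.mem_Ico.1 hx
      have h2 := hbound i
      omega) with hρ
  have hρcard : ∀ i, (ρ i).card = m i := by
    intro i
    rw [hρ]
    simp [Finset.card_attachFin, Nat.card_Ico]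
  have hρmem : ∀ (i : Fin ℓ) (r : Fin k), r ∈ ρ i ↔ (t i ≤ (r : ℕ) ∧ (r : ℕ) < t i + m i) := by
    intro i r
    rw [hρ]
    simp [Finset.mem_attachFin, Finset.mem_Ico]
  have hstep : ∀ i i' : Fin ℓ, i < i' → t i + m i ≤ t i' := by
    intro i i' hii'
    have h1 : Finset.Iic i ⊆ Finset.Iio i' := fun j hj =>
      Finset.mem_Iio.2 (lt_of_le_of_lt (Finset.mem_Iic.1 hj) hii')
    have h2 : ∑ j ∈ Finset.Iic i, m j ≤ ∑ j ∈ Finset.Iio i', m j :=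
      Finset.sum_le_sum_of_subset h1
    have h3 : t i' = ∑ j ∈ Finset.Iio i', m j := rfl
    have h4 := hIic i
    omega
  have huniq : ∀ (i i' : Fin ℓ) (r : Fin k), r ∈ ρ i → r ∈ ρ i' → i = i' := by
    intro i i' r h1 h2
    rw [hρmem] at h1 h2
    by_contra hne
    rcases lt_or_gt_of_ne hne with hlt | hlt
    · have := hstep i i' hlt; omega
    · have := hstep i' i hlt; omega
  set S : Fin k → Finset (Fin n) := fun r =>
    if hr : ∃ i, r ∈ ρ i then A hr.choose else ∅ with hS
  have hSspec : ∀ (r : Fin k) (i : Fin ℓ), r ∈ ρ i → S r = A i := by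
    intro r i hri
    have hex : ∃ i, r ∈ ρ i := ⟨i, hri⟩
    rw [hS]
    dsimp only
    rw [dif_pos hex, huniq hex.choose i r hex.choose_spec hri]
  -- ### Genericity of the pattern.
  have hgen : IsGenericZP S := by
    intro I hI
    by_cases hall : ∀ r ∈ I, ∃ i, r ∈ ρ i
    · set T : Finset (Fin ℓ) := Finset.univ.filter (fun i => (ρ i ∩ I).Nonempty) with hT
      have hTne : T.Nonempty := by
        obtain ⟨r₀, hr₀⟩ := hI
        obtain ⟨i, hi⟩ := hall r₀ hr₀
        exact ⟨i, Finset.mem_filter.2 ⟨Finset.mem_univ _,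
          ⟨r₀, Finset.mem_inter.2 ⟨hi, hr₀⟩⟩⟩⟩
      have hIsub : I ⊆ T.biUnion ρ := by
        intro r hr
        obtain ⟨i, hi⟩ := hall r hr
        exact Finset.mem_biUnion.2 ⟨i, Finset.mem_filter.2 ⟨Finset.mem_univ _,
          ⟨r, Finset.mem_inter.2 ⟨hi, hr⟩⟩⟩, hi⟩
      have hIcard : I.card ≤ ∑ i ∈ T, m i :=
        calc I.card ≤ (T.biUnion ρ).card := Finset.card_le_card hIsub
          _ ≤ ∑ i ∈ T, (ρ i).card := Finset.card_biUnion_le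
          _ = ∑ i ∈ T, m i := Finset.sum_congr rfl fun i _ => hρcard i
      have hinfsub : I.inf S ⊆ T.inf A := by
        show I.inf S ≤ T.inf A
        apply Finset.le_inf
        intro i hiT
        obtain ⟨r, hr⟩ := (Finset.mem_filter.1 hiT).2
        rw [Finset.mem_inter] at hr
        calc I.inf S ≤ S r := Finset.inf_le hr.2
          _ = A i := hSspec r i hr.1
      obtain ⟨i₀, hi₀⟩ := hTne
      have hk1 : (T.inf A).card ≤ k := hcardinf i₀ T hi₀
      have hfT := hfeas T
      have hle2 := Finset.card_le_card hinfsub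
      simp only [hhfun] at hfT
      omega
    · push_neg at hall
      obtain ⟨r₀, hr₀I, hr₀⟩ := hall
      have hz : S r₀ = ∅ := by
        rw [hS]
        dsimp only
        rw [dif_neg (by push_neg; exact hr₀)]
      have hsubz : I.inf S ⊆ (∅ : Finset (Fin n)) := le_trans (Finset.inf_le hr₀I) hz.le
      simp [Finset.card_eq_zero.2 (Finset.subset_empty.1 hsubz)]
  -- ### Order of the pattern.
  have horder : patternOrder S ≤ ℓ := by
    unfold patternOrder
    have hsub2 : (Finset.univ.image S).erase ∅ ⊆ Finset.univ.image A := by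
      intro x hx
      obtain ⟨hxne, hx2⟩ := Finset.mem_erase.1 hx
      obtain ⟨r, _, hr⟩ := Finset.mem_image.1 hx2
      by_cases hex : ∃ i, r ∈ ρ i
      · obtain ⟨i, hi⟩ := hex
        rw [← hr, hSspec r i hi]
        exact Finset.mem_image_of_mem A (Finset.mem_univ i)
      · exfalso
        apply hxne
        rw [← hr, hS]
        dsimp only
        rw [dif_neg hex]
    calc ((Finset.univ.image S).erase ∅).card
        ≤ (Finset.univ.image A).card := Finset.card_le_card hsub2
      _ ≤ (Finset.univ : Finset (Fin ℓ)).card := Finset.card_image_le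
      _ = ℓ := by simp
  obtain ⟨M, hMdet, hMzero⟩ := hatt S hgen horder
  -- ### The rank bound.
  set R : Finset (Fin k) := Finset.univ.biUnion ρ with hR
  have hRcard : R.card = ∑ j, m j := by
    rw [hR, Finset.card_biUnion]
    · exact Finset.sum_congr rfl fun i _ => hρcard i
    · intro i _ i' _ hne
      rw [Function.onFun, Finset.disjoint_left]
      intro r hr1 hr2
      exact hne (huniq i i' r hr1 hr2)
  set N : Matrix {r // r ∈ R} (Fin k) F := fun r u => M r.1 u with hN
  have hMunit : IsUnit M := (Matrix.isUnit_iff_isUnit_det M).2 hMdet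
  have hrows : LinearIndependent F (fun r : {r // r ∈ R} => N r) :=
    (Matrix.linearIndependent_rows_iff_isUnit.2 hMunit).comp Subtype.val Subtype.val_injective
  have hrankN : Module.finrank F ↥(LinearMap.range N.mulVecLin) = R.card := by
    have h1 : N.rank = R.card := by
      rw [← Matrix.rank_transpose, Matrix.rank_eq_finrank_span_cols]
      exact (finrank_span_eq_card hrows).trans (Fintype.card_coe _)
    rw [← h1]
    rfl
  have hWker : W ≤ LinearMap.ker N.mulVecLin := by
    intro x hx
    rw [LinearMap.mem_ker]
    funext r
    obtain ⟨i, _, hri⟩ := Finset.mem_biUnion.1 r.2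
    set φ : (Fin k → F) →ₗ[F] F := (LinearMap.proj r).comp N.mulVecLin with hφ
    have hx_i : x ∈ colSpan G (A i) := (iInf_le (fun i => colSpan G (A i)) i) hx
    have hcol : colSpan G (A i) ≤ LinearMap.ker φ := by
      rw [colSpan, Submodule.span_le]
      rintro y ⟨j, hj, rfl⟩
      simp only [SetLike.mem_coe, LinearMap.mem_ker, hφ, LinearMap.comp_apply,
        LinearMap.proj_apply]
      have heq : N.mulVecLin (fun i' => G i' j) r = (M * G) r.1 j := by
        rfl
      rw [heq]
      exact hMzero r.1 j (by rw [hSspec r.1 i hri]; exact hj)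
    have := hcol hx_i
    rw [LinearMap.mem_ker, hφ, LinearMap.comp_apply, LinearMap.proj_apply] at this
    simpa using this
  have hrk : Module.finrank F ↥W + R.card ≤ k := by
    have h1 := LinearMap.finrank_range_add_finrank_ker N.mulVecLin
    rw [Module.finrank_pi, Fintype.card_fin] at h1
    have h2 : Module.finrank F ↥W ≤ Module.finrank F ↥(LinearMap.ker N.mulVecLin) :=
      Submodule.finrank_mono hWker
    omega
  -- ### Arithmetic conclusion.
  have hinfcard : ∀ p ∈ P₀.parts, (p.inf A).card ≤ k := by
    intro p hp
    obtain ⟨i, hi⟩ := P₀.nonempty_of_mem_parts hp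
    exact hcardinf i p hi
  have hZ2 : ((∑ j, m j : ℕ) : ℤ) =
      (P₀.parts.card : ℤ) * k - ∑ p ∈ P₀.parts, ((p.inf A).card : ℤ) := by
    have h2 : ∑ p ∈ P₀.parts, ((hfun p : ℕ) : ℤ) =
        ∑ p ∈ P₀.parts, ((k : ℤ) - ((p.inf A).card : ℤ)) := by
      refine Finset.sum_congr rfl fun p hp => ?_
      simp only [hhfun]
      rw [Nat.cast_sub (hinfcard p hp)]
    rw [hsum, Nat.cast_sum, h2, Finset.sum_sub_distrib, Finset.sum_const, nsmul_eq_mul]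
  have hup : (Module.finrank F ↥W : ℤ) ≤ partVal k A P₀ := by
    have hZ1 : (Module.finrank F ↥W : ℤ) ≤ (k : ℤ) - ((∑ j, m j : ℕ) : ℤ) := by
      have h1 := hrk
      have h2 := hRcard
      omega
    unfold partVal
    rw [hZ2] at hZ1
    linarith
  constructor
  · exact ⟨P₀, le_antisymm hup (hlow P₀)⟩
  · rintro v ⟨P, rfl⟩
    exact hlow P

end
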